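/- Let p be a prime, let q₀ be a positive power of p and let q = q₀^e be a positive power of q₀, where q₀ ≢ 1 (mod 3) and e ≢ 0 (mod 3). Set n₀ = q₀² + q₀ + 1 and n = q² + q + 1. Then n₀ divides n, and there exist difference sets D₀ ⊆ ℤ/n₀ℤ and D ⊆ ℤ/nℤ such that 0, 1 ∈ D₀ and such that for every d ∈ D₀ the element (n/n₀)·d̃ of ℤ/nℤ lies in D, where d̃ ∈ {0, …, n₀−1} denotes the integer representative of d. -/

import Mathlib

/-- A subset `D` of `ℤ/mℤ` is a difference set if every nonzero element `a` can be written
in exactly one way as `a = d₁ − d₂` with `d₁, d₂ ∈ D`. -/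
def IsDifferenceSet {m : ℕ} (D : Set (ZMod m)) : Prop :=
  ∀ a : ZMod m, a ≠ 0 → ∃! p : ZMod m × ZMod m, p.1 ∈ D ∧ p.2 ∈ D ∧ p.1 - p.2 = a


open Polynomial in
lemma card_fixed_pow {E : Type*} [Field E] [Fintype E] (q : ℕ) (hq2 : 2 ≤ q) (hq0 : (q:E) = 0)
    (hdvd : q - 1 ∣ Fintype.card E - 1) :
    ({x : E | x ^ q = x}).ncard = q := by
  classical
  set f : E[X] := X ^ q - X with hf
  have hfu : 1 < q := hq2
  have hfdeg : f.natDegree = q := FiniteField.X_pow_card_sub_X_natDegree_eq E hfu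
  have hfne : f ≠ 0 := FiniteField.X_pow_card_sub_X_ne_zero E hfu
  have hgne : (X ^ Fintype.card E - X : E[X]) ≠ 0 :=
    FiniteField.X_pow_card_sub_X_ne_zero E Fintype.one_lt_card
  have hdvd' : f ∣ (X ^ Fintype.card E - X : E[X]) := by
    obtain ⟨t, ht⟩ := hdvd
    have h1 : (X : E[X]) ^ q - X = X * (X ^ (q-1) - 1) := by
      rw [mul_sub, mul_one, ← pow_succ']
      congr 2
      omega
    have h2 : (X : E[X]) ^ Fintype.card E - X = X * (X ^ (Fintype.card E - 1) - 1) := by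
      rw [mul_sub, mul_one, ← pow_succ']
      congr 2
      have := Fintype.one_lt_card (α := E)
      omega
    rw [hf, h1, h2, ht]
    refine mul_dvd_mul_left _ ?_
    have := sub_dvd_pow_sub_pow ((X : E[X]) ^ (q-1)) 1 t
    rwa [one_pow, ← pow_mul] at this
  have hsplit : Splits f := by
    refine Splits.of_dvd ?_ hgne hdvd'
    rw [splits_iff_card_roots, FiniteField.roots_X_pow_card_sub_X,
      FiniteField.X_pow_card_sub_X_natDegree_eq E Fintype.one_lt_card]
    simp
  have hsep : f.Separable := by
    rw [separable_def]
    convert isCoprime_one_right.neg_right (R := E[X]) using 1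
    · rfl
    rw [hf, derivative_sub, derivative_X, derivative_X_pow, hq0, C_0, zero_mul, zero_sub]
  have hcard : f.roots.card = q := by
    rw [splits_iff_card_roots] at hsplit
    rw [hsplit, hfdeg]
  have hnodup : f.roots.Nodup := nodup_roots hsep
  have hset : {x : E | x ^ q = x} = ↑f.roots.toFinset := by
    ext x
    simp only [Set.mem_setOf_eq, Finset.coe_sort_coe, Multiset.mem_toFinset, Finset.mem_coe]
    rw [mem_roots hfne, IsRoot.def, hf]
    simp [sub_eq_zero]
  rw [hset, Set.ncard_coe_finset, Multiset.toFinset_card_of_nodup hnodup, hcard]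
section FrobFix
variable {E : Type*} [Field E] (p : ℕ) [Fact p.Prime] [CharP E p]

lemma fix_pow_mul {a : ℕ} (t : ℕ) {x : E} (h : x ^ p ^ a = x) : x ^ p ^ (a * t) = x := by
  induction t with
  | zero => simp
  | succ t ih =>
    have : p ^ (a * (t+1)) = p ^ (a*t) * p ^ a := by rw [← pow_add]; ring_nf
    rw [this, pow_mul, ih, h]

lemma fix_pow_gcd {a b : ℕ} {x : E} (h1 : x ^ p ^ a = x) (h2 : x ^ p ^ b = x) :
    x ^ p ^ (Nat.gcd a b) = x := by
  induction a, b using Nat.gcd.induction with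
  | H0 n => rwa [Nat.gcd_zero_left]
  | H1 m n hm ih =>
    rw [Nat.gcd_rec]
    refine ih ?_ h1
    -- show x ^ p ^ (n % m) = x
    have hinj : Function.Injective (iterateFrobenius E p (m * (n / m))) :=
      (iterateFrobenius E p (m * (n / m))).injective
    apply hinj
    have hfixm : x ^ p ^ (m * (n / m)) = x := fix_pow_mul p (n / m) h1
    rw [iterateFrobenius_def, iterateFrobenius_def, ← pow_mul, ← pow_add, hfixm]
    have : n % m + m * (n / m) = n := Nat.mod_add_div n m
    rw [this, h2]

lemma fix_pow_dvd {a b : ℕ} {x : E} (hab : a ∣ b) (h : x ^ p ^ a = x) : x ^ p ^ b = x := by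
  obtain ⟨t, rfl⟩ := hab
  exact fix_pow_mul p t h

end FrobFix

/-- membership in the plane spanned by `1` and `u` over the fixed field of `x ↦ x^q` -/
def inW {E : Type*} [Field E] (q : ℕ) (u x : E) : Prop :=
  ∃ a b : E, a ^ q = a ∧ b ^ q = b ∧ x = a + b * u

section Singer
variable {E : Type*} [Field E] [Fintype E] {q : ℕ}

lemma singer_core (hq2 : 2 ≤ q) (hq0 : (q : E) = 0)
    (hfrob : ∀ x y : E, (x + y) ^ q = x ^ q + y ^ q)
    (hcard : Fintype.card E = q ^ 3)
    {u v : E} (hu : u ^ q ≠ u) (hv : v ^ q ≠ v) :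
    (∃ x : E, x ≠ 0 ∧ inW q u x ∧ inW q u (v * x)) ∧
    (∀ x y : E, x ≠ 0 → y ≠ 0 → inW q u x → inW q u (v * x) → inW q u y → inW q u (v * y) →
      ∃ t : E, t ^ q = t ∧ y = t * x) := by
  classical
  have hqne : q ≠ 0 := by omega
  have hv0 : v ≠ 0 := by rintro rfl; simp [zero_pow hqne] at hv
  have hsub : ∀ a b : E, (a - b) ^ q = a ^ q - b ^ q := by
    intro a b
    have h := hfrob (a - b) b
    rw [sub_add_cancel] at h
    linear_combination -h
  have hneg : ∀ a : E, (-a) ^ q = -(a ^ q) := by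
    intro a; have h := hsub 0 a; simpa [zero_pow hqne] using h
  have finj : ∀ x y : E, x ^ q = y ^ q → x = y := by
    intro x y h
    have h1 : (x - y) ^ q = 0 := by rw [hsub, h, sub_self]
    have h2 := pow_eq_zero_iff hqne |>.mp h1
    linear_combination h2
  have hindep : ∀ a b : E, a ^ q = a → b ^ q = b → a + b * u = 0 → a = 0 ∧ b = 0 := by
    intro a b ha hb h
    by_cases hb0 : b = 0
    · subst hb0
      exact ⟨by linear_combination h, rfl⟩
    · exfalso
      apply hu
      have hu' : u = -a / b := by field_simp; linear_combination h
      rw [hu', div_pow, hneg, ha, hb]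
  have hWcomb : ∀ c d x y : E, c ^ q = c → d ^ q = d → inW q u x → inW q u y →
      inW q u (c * x + d * y) := by
    rintro c d x y hc hd ⟨a, b, ha, hb, rfl⟩ ⟨a', b', ha', hb', rfl⟩
    exact ⟨c * a + d * a', c * b + d * b', by rw [hfrob, mul_pow, mul_pow, hc, ha, hd, ha'],
      by rw [hfrob, mul_pow, mul_pow, hc, hb, hd, hb'], by ring⟩
  constructor
  · -- EXISTENCE
    have hKcard : ({x : E | x ^ q = x}).ncard = q := by
      apply card_fixed_pow q hq2 hq0
      rw [hcard]
      have h := Nat.sub_dvd_pow_sub_pow q 1 3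
      simpa using h
    have hKTcard : Fintype.card {x : E // x ^ q = x} = q := by
      rw [← Nat.card_eq_fintype_card]
      exact (Nat.card_coe_set_eq _).trans hKcard
    have hlt : Fintype.card E <
        Fintype.card ({x : E // x ^ q = x} × {x : E // x ^ q = x} ×
          {x : E // x ^ q = x} × {x : E // x ^ q = x}) := by
      simp only [Fintype.card_prod, hKTcard, hcard]
      calc q ^ 3 < q ^ 4 := Nat.pow_lt_pow_right (by omega) (by omega)
        _ = q * (q * (q * q)) := by ring
    obtain ⟨⟨a, b, c, d⟩, ⟨a', b', c', d'⟩, hne, heq⟩ :=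
      Fintype.exists_ne_map_eq_of_card_lt
        (fun t : {x : E // x ^ q = x} × {x : E // x ^ q = x} ×
            {x : E // x ^ q = x} × {x : E // x ^ q = x} =>
          t.1.1 + t.2.1.1 * u + t.2.2.1.1 * v⁻¹ + t.2.2.2.1 * (v⁻¹ * u)) hlt
    simp only at heq
    set α := a.1 - a'.1 with hα
    set β := b.1 - b'.1 with hβ
    set γ := c.1 - c'.1 with hγ
    set δ := d.1 - d'.1 with hδ
    have hαK : α ^ q = α := by rw [hα, hsub, a.2, a'.2]
    have hβK : β ^ q = β := by rw [hβ, hsub, b.2, b'.2]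
    have hγK : γ ^ q = γ := by rw [hγ, hsub, c.2, c'.2]
    have hδK : δ ^ q = δ := by rw [hδ, hsub, d.2, d'.2]
    have hrel : α + β * u + γ * v⁻¹ + δ * (v⁻¹ * u) = 0 := by
      rw [hα, hβ, hγ, hδ]; linear_combination heq
    have hnz : ¬(α = 0 ∧ β = 0 ∧ γ = 0 ∧ δ = 0) := by
      rintro ⟨h1, h2, h3, h4⟩
      apply hne
      have e1 : a = a' := Subtype.ext (by rw [hα] at h1; linear_combination h1)
      have e2 : b = b' := Subtype.ext (by rw [hβ] at h2; linear_combination h2)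
      have e3 : c = c' := Subtype.ext (by rw [hγ] at h3; linear_combination h3)
      have e4 : d = d' := Subtype.ext (by rw [hδ] at h4; linear_combination h4)
      rw [e1, e2, e3, e4]
    refine ⟨α + β * u, ?_, ⟨α, β, hαK, hβK, rfl⟩, ?_⟩
    · intro h0
      have hrest : γ + δ * u = 0 := by
        have h5 : γ * v⁻¹ + δ * (v⁻¹ * u) = 0 := by linear_combination hrel - h0
        have h6 : v * (γ * v⁻¹ + δ * (v⁻¹ * u)) = 0 := by rw [h5, mul_zero]
        have h7 : γ + δ * u = v * (γ * v⁻¹ + δ * (v⁻¹ * u)) := by field_simp; try ring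
        rw [h7, h6]
      obtain ⟨e1, e2⟩ := hindep α β hαK hβK h0
      obtain ⟨e3, e4⟩ := hindep γ δ hγK hδK hrest
      exact hnz ⟨e1, e2, e3, e4⟩
    · have hvx : v * (α + β * u) = (-γ) + (-δ) * u := by
        have h5 : α + β * u = -(γ * v⁻¹ + δ * (v⁻¹ * u)) := by linear_combination hrel
        rw [h5]
        field_simp
        ring
      rw [hvx]
      exact ⟨-γ, -δ, by rw [hneg, hγK], by rw [hneg, hδK], rfl⟩
  · -- UNIQUENESS
    rintro x y hx0 hy0 ⟨a, b, ha, hb, rfl⟩ hvx ⟨a', b', ha', hb', rfl⟩ hvy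
    obtain ⟨det, hdet⟩ : ∃ d : E, d = a * b' - a' * b := ⟨_, rfl⟩
    have hdetK : det ^ q = det := by rw [hdet, hsub, mul_pow, mul_pow, ha, hb', ha', hb]
    by_cases hd0 : det = 0
    · by_cases hb0 : b = 0
      · have ha0 : a ≠ 0 := by rintro rfl; simp [hb0] at hx0
        have hb'0 : b' = 0 := by
          rw [hdet, hb0] at hd0
          rcases mul_eq_zero.mp (by linear_combination hd0 : a * b' = 0) with h | h
          · exact absurd h ha0
          · exact h
        refine ⟨a' / a, by rw [div_pow, ha, ha'], ?_⟩
        rw [hb0, hb'0]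
        field_simp
        ring
      · refine ⟨b' / b, by rw [div_pow, hb, hb'], ?_⟩
        rw [hdet] at hd0
        field_simp
        linear_combination -hd0
    · exfalso
      have hWv : inW q u v := by
        have hcomb := hWcomb (b' / det) (-(b / det)) (v * (a + b * u)) (v * (a' + b' * u))
          (by rw [div_pow, hb', hdetK]) (by rw [hneg, div_pow, hb, hdetK]) hvx hvy
        have h5 : b' / det * (v * (a + b * u)) + -(b / det) * (v * (a' + b' * u)) = v := by
          field_simp
          rw [hdet]
          ring
        rwa [h5] at hcomb
      have hWvu : inW q u (v * u) := by
        have hcomb := hWcomb (-(a' / det)) (a / det) (v * (a + b * u)) (v * (a' + b' * u))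
          (by rw [hneg, div_pow, ha', hdetK]) (by rw [div_pow, ha, hdetK]) hvx hvy
        have h5 : -(a' / det) * (v * (a + b * u)) + a / det * (v * (a' + b' * u)) = v * u := by
          field_simp
          rw [hdet]
          ring
        rwa [h5] at hcomb
      obtain ⟨A, B, hA, hB, hvAB⟩ := hWv
      obtain ⟨A', B', hA', hB', hvuAB⟩ := hWvu
      have hB0 : B ≠ 0 := by
        rintro rfl
        rw [zero_mul, add_zero] at hvAB
        rw [hvAB, hA] at hv
        exact hv rfl
      obtain ⟨S, hS⟩ : ∃ s : E, s = A + B' := ⟨_, rfl⟩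
      obtain ⟨P, hP⟩ : ∃ s : E, s = A' * B - B' * A := ⟨_, rfl⟩
      have hquad : v * v = S * v + P := by
        have hu_eq : u = (v - A) / B := by rw [hvAB]; field_simp; try ring
        have h5 : v * u = A' + B' * u := hvuAB
        rw [hu_eq] at h5
        field_simp at h5
        rw [hS, hP]
        linear_combination h5
      have hSK : S ^ q = S := by rw [hS, hfrob, hA, hB']
      have hPK : P ^ q = P := by rw [hP, hsub, mul_pow, mul_pow, hA, hB, hA', hB']
      have hroot : ∀ z : E, z * z = S * z + P → (z ^ q) * (z ^ q) = S * z ^ q + P := by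
        intro z hz
        have h5 : (z * z) ^ q = (S * z + P) ^ q := by rw [hz]
        rw [mul_pow, hfrob, mul_pow, hSK, hPK] at h5
        exact h5
      have hroot2 : (v ^ q) * (v ^ q) = S * v ^ q + P := hroot v hquad
      have hroot3 : ((v ^ q) ^ q) * ((v ^ q) ^ q) = S * (v ^ q) ^ q + P := hroot (v ^ q) hroot2
      have hpair : ∀ r s : E, r ≠ s → r * r = S * r + P → s * s = S * s + P → r + s = S := by
        intro r s hrs h1 h2
        have h3 : (r + s) * (r - s) = S * (r - s) := by linear_combination h1 - h2
        exact mul_right_cancel₀ (sub_ne_zero.mpr hrs) h3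
      have hq3 : ∀ x : E, ((x ^ q) ^ q) ^ q = x := by
        intro x
        have h5 := FiniteField.pow_card x
        rw [hcard] at h5
        rw [← pow_mul, ← pow_mul]
        have h6 : q * (q * q) = q ^ 3 := by ring
        rw [h6, h5]
      by_cases h2 : (v ^ q) ^ q = v
      · have h6 : ((v ^ q) ^ q) ^ q = v ^ q := by rw [h2]
        rw [hq3 v] at h6
        exact hv h6.symm
      by_cases h3 : (v ^ q) ^ q = v ^ q
      · exact hv (finj _ _ h3)
      · have e1 : v + v ^ q = S := hpair v (v ^ q) (fun h => hv h.symm) hquad hroot2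
        have e2 : v + (v ^ q) ^ q = S := hpair v ((v ^ q) ^ q) (fun h => h2 h.symm) hquad hroot3
        have e3 : v ^ q = (v ^ q) ^ q := by linear_combination e1 - e2
        exact h3 e3.symm

end Singer


def inW' {E : Type*} [Field E] (q : ℕ) (u x : E) : Prop :=
  ∃ a b : E, a ^ q = a ∧ b ^ q = b ∧ x = a + b * u

/-- units whose value lies in the fixed field of `x ↦ x^q` -/
def Sgrp (E : Type*) [Field E] (q : ℕ) : Subgroup Eˣ where
  carrier := {x : Eˣ | (x : E) ^ q = (x : E)}
  one_mem' := by simp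
  mul_mem' := by
    intro a b ha hb
    simp only [Set.mem_setOf_eq, Units.val_mul, mul_pow] at *
    rw [ha, hb]
  inv_mem' := by
    intro a ha
    simp only [Set.mem_setOf_eq] at *
    rw [Units.val_inv_eq_inv_val, inv_pow, ha]

lemma mem_Sgrp {E : Type*} [Field E] {q : ℕ} {x : Eˣ} :
    x ∈ Sgrp E q ↔ (x : E) ^ q = (x : E) := Iff.rfl

/-- the projective "line" in the quotient group -/
def Dproj (E : Type*) [Field E] (q : ℕ) (u : E) : Set (Eˣ ⧸ Sgrp E q) :=
  {c | ∃ x : Eˣ, inW' q u (x : E) ∧ QuotientGroup.mk x = c}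

lemma card_Sgrp (E : Type*) [Field E] [Fintype E] {q : ℕ} (hq2 : 2 ≤ q) (hq0 : (q : E) = 0)
    (hcardE : Fintype.card E = q ^ 3) : Nat.card (Sgrp E q) = q - 1 := by
  classical
  letI := Classical.decEq E
  letI : Fintype Eˣ := Fintype.ofFinite _
  have hKcard : ({x : E | x ^ q = x}).ncard = q := by
    apply card_fixed_pow q hq2 hq0
    rw [hcardE]
    have h := Nat.sub_dvd_pow_sub_pow q 1 3
    simpa using h
  have h0 : (0 : E) ∈ {x : E | x ^ q = x} := by
    simp only [Set.mem_setOf_eq]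
    exact zero_pow (by omega)
  have e : ↥(Sgrp E q) ≃ ↥({x : E | x ^ q = x} \ {0} : Set E) := by
    refine ⟨fun u => ⟨((u : Eˣ) : E), ⟨u.2, Units.ne_zero _⟩⟩,
      fun y => ⟨Units.mk0 y.1 y.2.2, y.2.1⟩, ?_, ?_⟩
    · intro u; ext; rfl
    · intro y; ext; rfl
  rw [Nat.card_congr e, Nat.card_coe_set_eq,
    Set.ncard_diff_singleton_of_mem h0, hKcard]

lemma card_quot (E : Type*) [Field E] [Fintype E] {q n : ℕ} (hq2 : 2 ≤ q) (hq0 : (q : E) = 0)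
    (hcardE : Fintype.card E = q ^ 3) (hn : n = q ^ 2 + q + 1) :
    Nat.card (Eˣ ⧸ Sgrp E q) = n := by
  have h1 : Nat.card Eˣ = q ^ 3 - 1 := by
    rw [Nat.card_units, Nat.card_eq_fintype_card, hcardE]
  have h2 := Subgroup.card_eq_card_quotient_mul_card_subgroup (Sgrp E q)
  rw [h1, card_Sgrp E hq2 hq0 hcardE] at h2
  have hq3 : 1 ≤ q ^ 3 := Nat.one_le_pow _ _ (by omega)
  have key : n * (q - 1) = q ^ 3 - 1 := by
    subst hn
    zify [hq3, (by omega : 1 ≤ q)]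
    push_cast
    ring
  have : n * (q - 1) = Nat.card (Eˣ ⧸ Sgrp E q) * (q - 1) := by rw [key, h2]
  have hpos : 0 < q - 1 := by omega
  exact Nat.eq_of_mul_eq_mul_right hpos this.symm

lemma grp_aux1 {G : Type*} [Group G] {a b c : G} (h : a * b⁻¹ = c) : a = c * b := by
  rw [← h]; group

lemma grp_aux2 {G : Type*} [Group G] {a b : G} (h : a = 1) : a * b = b := by
  rw [h]; group

section Quot
variable {E : Type*} [Field E] [Fintype E] {q : ℕ}

lemma inW'_smul {u t x : E} {q : ℕ} (ht : t ^ q = t) (hx : inW' q u x) :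
    inW' q u (t * x) := by
  obtain ⟨a, b, ha, hb, rfl⟩ := hx
  exact ⟨t * a, t * b, by rw [mul_pow, ht, ha], by rw [mul_pow, ht, hb], by ring⟩

lemma singer_quot (hq2 : 2 ≤ q) (hq0 : (q : E) = 0)
    (hfrob : ∀ x y : E, (x + y) ^ q = x ^ q + y ^ q)
    (hcard : Fintype.card E = q ^ 3)
    {u : E} (hu : u ^ q ≠ u) {c : Eˣ ⧸ Sgrp E q} (hc : c ≠ 1) :
    (∃ dd : (Eˣ ⧸ Sgrp E q) × (Eˣ ⧸ Sgrp E q),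
        dd.1 ∈ Dproj E q u ∧ dd.2 ∈ Dproj E q u ∧ dd.1 * dd.2⁻¹ = c) ∧
    ∀ dd dd' : (Eˣ ⧸ Sgrp E q) × (Eˣ ⧸ Sgrp E q),
      (dd.1 ∈ Dproj E q u ∧ dd.2 ∈ Dproj E q u ∧ dd.1 * dd.2⁻¹ = c) →
      (dd'.1 ∈ Dproj E q u ∧ dd'.2 ∈ Dproj E q u ∧ dd'.1 * dd'.2⁻¹ = c) → dd = dd' := by
  obtain ⟨v, rfl⟩ := QuotientGroup.mk_surjective c
  have hqne : q ≠ 0 := by omega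
  have hv : (v : E) ^ q ≠ (v : E) := by
    intro h
    exact hc ((QuotientGroup.eq_one_iff v).mpr h)
  obtain ⟨hex, huniq⟩ := singer_core hq2 hq0 hfrob hcard hu hv
  have hcanon : ∀ dd : (Eˣ ⧸ Sgrp E q) × (Eˣ ⧸ Sgrp E q),
      (dd.1 ∈ Dproj E q u ∧ dd.2 ∈ Dproj E q u ∧ dd.1 * dd.2⁻¹ = QuotientGroup.mk v) →
      ∃ x₂ : Eˣ, inW' q u (x₂ : E) ∧ inW' q u ((v : E) * (x₂ : E)) ∧
        QuotientGroup.mk x₂ = dd.2 ∧ dd.1 = QuotientGroup.mk v * dd.2 := by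
    intro dd hh
    obtain ⟨⟨w, hwW, hw⟩, ⟨x₂, hx₂W, hx₂⟩, hprod⟩ := hh
    have hd1 : dd.1 = QuotientGroup.mk v * dd.2 := grp_aux1 hprod
    refine ⟨x₂, hx₂W, ?_, hx₂, hd1⟩
    have hmk : (QuotientGroup.mk w : Eˣ ⧸ Sgrp E q) = QuotientGroup.mk (v * x₂) := by
      rw [hw, hd1, ← hx₂, QuotientGroup.mk_mul]
    have hs := (QuotientGroup.eq (s := Sgrp E q)).mp hmk
    have hsq : ((w⁻¹ * (v * x₂) : Eˣ) : E) ^ q = ((w⁻¹ * (v * x₂) : Eˣ) : E) := hs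
    have hval : ((v : E) * (x₂ : E)) = ((w⁻¹ * (v * x₂) : Eˣ) : E) * (w : E) := by
      push_cast
      field_simp
    rw [hval]
    exact inW'_smul hsq hwW
  constructor
  · obtain ⟨x, hx0, hxW, hvxW⟩ := hex
    refine ⟨(QuotientGroup.mk (v * Units.mk0 x hx0), QuotientGroup.mk (Units.mk0 x hx0)),
      ⟨v * Units.mk0 x hx0, ?_, rfl⟩, ⟨Units.mk0 x hx0, ?_, rfl⟩, ?_⟩
    · exact (by simpa using hvxW : inW q u ((v * Units.mk0 x hx0 : Eˣ) : E))
    · exact (by simpa using hxW : inW q u ((Units.mk0 x hx0 : Eˣ) : E))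
    · rw [← QuotientGroup.mk_inv, ← QuotientGroup.mk_mul]
      congr 1
      group
  · intro dd dd' h h'
    obtain ⟨x₂, hx₂W, hvx₂W, hx₂, hd1⟩ := hcanon dd h
    obtain ⟨y₂, hy₂W, hvy₂W, hy₂, hd1'⟩ := hcanon dd' h'
    obtain ⟨t, htK, hty⟩ := huniq (x₂ : E) (y₂ : E) (Units.ne_zero _) (Units.ne_zero _)
      hx₂W hvx₂W hy₂W hvy₂W
    have ht0 : t ≠ 0 := by
      intro h0
      exact Units.ne_zero y₂ (by rw [hty, h0, zero_mul])
    have hyx : y₂ = Units.mk0 t ht0 * x₂ := Units.ext (by simpa using hty)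
    have hmem : Units.mk0 t ht0 ∈ Sgrp E q := htK
    have hone : (QuotientGroup.mk (Units.mk0 t ht0) : Eˣ ⧸ Sgrp E q) = 1 :=
      (QuotientGroup.eq_one_iff _).mpr hmem
    have h2 : dd.2 = dd'.2 := by
      rw [← hx₂, ← hy₂, hyx, QuotientGroup.mk_mul]
      exact (grp_aux2 hone).symm
    have h1 : dd.1 = dd'.1 := by rw [hd1, hd1', h2]
    exact Prod.ext h1 h2

end Quot

section GroupDiff
variable {G : Type*} [Group G] [Finite G]

lemma group_diff_set (n : ℕ) (hn : 1 < n) (g : G) (horder : orderOf g = n)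
    (hg : ∀ x : G, x ∈ Subgroup.zpowers g) (Dq : Set G)
    (hpairs : ∀ c : G, c ≠ 1 →
      (∃ dd : G × G, dd.1 ∈ Dq ∧ dd.2 ∈ Dq ∧ dd.1 * dd.2⁻¹ = c) ∧
      ∀ dd dd' : G × G, (dd.1 ∈ Dq ∧ dd.2 ∈ Dq ∧ dd.1 * dd.2⁻¹ = c) →
        (dd'.1 ∈ Dq ∧ dd'.2 ∈ Dq ∧ dd'.1 * dd'.2⁻¹ = c) → dd = dd') :
    ∀ a : ZMod n, a ≠ 0 → ∃! pp : ZMod n × ZMod n,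
      pp.1 ∈ {b : ZMod n | g ^ b.val ∈ Dq} ∧
      pp.2 ∈ {b : ZMod n | g ^ b.val ∈ Dq} ∧ pp.1 - pp.2 = a := by
  haveI : NeZero n := ⟨by omega⟩
  have hβ : ∀ a b : ZMod n, g ^ (a - b).val * g ^ b.val = g ^ a.val := by
    intro a b
    rw [← pow_add, pow_eq_pow_iff_modEq, horder]
    have h1 := ZMod.val_add (a - b) b
    rw [sub_add_cancel] at h1
    show ((a - b).val + b.val) % n = a.val % n
    rw [← h1, Nat.mod_eq_of_lt (ZMod.val_lt _)]
  have hβ' : ∀ a b : ZMod n, g ^ (a - b).val = g ^ a.val * (g ^ b.val)⁻¹ := by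
    intro a b
    rw [← hβ a b]
    group
  have hβinj : ∀ a b : ZMod n, g ^ a.val = g ^ b.val → a = b := by
    intro a b h
    rw [pow_eq_pow_iff_modEq, horder, Nat.ModEq,
      Nat.mod_eq_of_lt (ZMod.val_lt _), Nat.mod_eq_of_lt (ZMod.val_lt _)] at h
    have h1 : ((a.val : ℕ) : ZMod n) = ((b.val : ℕ) : ZMod n) := by rw [h]
    rwa [ZMod.natCast_rightInverse a, ZMod.natCast_rightInverse b] at h1
  have hgsurj : ∀ c : G, ∃ b : ZMod n, g ^ b.val = c := by
    intro c
    obtain ⟨m, hm⟩ := (mem_powers_iff_mem_zpowers).mpr (hg c)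
    refine ⟨(m : ZMod n), ?_⟩
    rw [ZMod.val_natCast, ← hm, pow_eq_pow_iff_modEq, horder]
    exact Nat.mod_modEq m n
  intro a ha
  have hc : g ^ a.val ≠ 1 := by
    intro h
    apply ha
    apply hβinj a 0
    rw [h, ZMod.val_zero, pow_zero]
  obtain ⟨hex, huniq⟩ := hpairs (g ^ a.val) hc
  obtain ⟨dd, hdd1, hdd2, hddp⟩ := hex
  obtain ⟨b₁, hb₁⟩ := hgsurj dd.1
  obtain ⟨b₂, hb₂⟩ := hgsurj dd.2
  have hdiff : b₁ - b₂ = a := by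
    apply hβinj
    rw [hβ' b₁ b₂, hb₁, hb₂, hddp]
  have hmem1 : g ^ b₁.val ∈ Dq := by rw [hb₁]; exact hdd1
  have hmem2 : g ^ b₂.val ∈ Dq := by rw [hb₂]; exact hdd2
  refine ⟨(b₁, b₂), ⟨hmem1, hmem2, hdiff⟩, ?_⟩
  rintro ⟨c₁, c₂⟩ ⟨hc₁, hc₂, hcd⟩
  have key := huniq (g ^ c₁.val, g ^ c₂.val) (g ^ b₁.val, g ^ b₂.val)
    ⟨hc₁, hc₂, by rw [← hβ' c₁ c₂, hcd]⟩
    ⟨hmem1, hmem2, by rw [← hβ' b₁ b₂, hdiff]⟩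
  have e1 : c₁ = b₁ := hβinj _ _ (congrArg Prod.fst key)
  have e2 : c₂ = b₂ := hβinj _ _ (congrArg Prod.snd key)
  rw [e1, e2]

end GroupDiff

lemma pow_sub_one_dvd_pow_sub_one (p a b : ℕ) (h : a ∣ b) : p ^ a - 1 ∣ p ^ b - 1 := by
  obtain ⟨t, rfl⟩ := h
  have h2 := Nat.sub_dvd_pow_sub_pow (p ^ a) 1 t
  rwa [one_pow, ← pow_mul] at h2

lemma n0_dvd_n {q₀ e n₀ n : ℕ} (he3 : e % 3 ≠ 0)
    (hn₀ : n₀ = q₀ ^ 2 + q₀ + 1) (hn : n = (q₀ ^ e) ^ 2 + q₀ ^ e + 1) : n₀ ∣ n := by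
  have key : (n₀ : ℤ) ∣ (n : ℤ) := by
    have h1 : (q₀ : ℤ) ^ 3 ≡ 1 [ZMOD (n₀ : ℤ)] :=
      Int.ModEq.symm (Int.modEq_iff_dvd.mpr ⟨(q₀ : ℤ) - 1, by rw [hn₀]; push_cast; ring⟩)
    have hq_mod : (q₀ : ℤ) ^ e ≡ (q₀ : ℤ) ^ (e % 3) [ZMOD (n₀ : ℤ)] := by
      calc (q₀ : ℤ) ^ e = ((q₀ : ℤ) ^ 3) ^ (e / 3) * (q₀ : ℤ) ^ (e % 3) := by
            rw [← pow_mul, ← pow_add]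
            congr 1
            omega
        _ ≡ 1 ^ (e / 3) * (q₀ : ℤ) ^ (e % 3) [ZMOD (n₀ : ℤ)] :=
            Int.ModEq.mul_right _ (h1.pow _)
        _ = (q₀ : ℤ) ^ (e % 3) := by rw [one_pow, one_mul]
    have hn_mod : (n : ℤ) ≡ ((q₀ : ℤ) ^ (e % 3)) ^ 2 + (q₀ : ℤ) ^ (e % 3) + 1
        [ZMOD (n₀ : ℤ)] := by
      have hcast : (n : ℤ) = ((q₀ : ℤ) ^ e) ^ 2 + (q₀ : ℤ) ^ e + 1 := by rw [hn]; push_cast; ring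
      rw [hcast]
      exact ((hq_mod.pow 2).add hq_mod).add_right 1
    have hr : e % 3 = 1 ∨ e % 3 = 2 := by omega
    rcases hr with hr | hr
    · rw [hr] at hn_mod
      have hd : (n₀ : ℤ) ∣ ((q₀ : ℤ) ^ 1) ^ 2 + (q₀ : ℤ) ^ 1 + 1 :=
        ⟨1, by rw [hn₀]; push_cast; ring⟩
      exact (Int.modEq_zero_iff_dvd).mp (hn_mod.trans ((Int.modEq_zero_iff_dvd).mpr hd))
    · rw [hr] at hn_mod
      have hd : (n₀ : ℤ) ∣ ((q₀ : ℤ) ^ 2) ^ 2 + (q₀ : ℤ) ^ 2 + 1 :=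
        ⟨(q₀ : ℤ) ^ 2 - q₀ + 1, by rw [hn₀]; push_cast; ring⟩
      exact (Int.modEq_zero_iff_dvd).mp (hn_mod.trans ((Int.modEq_zero_iff_dvd).mpr hd))
  exact_mod_cast key

lemma charP_subfield {E : Type*} [Field E] (p : ℕ) [CharP E p] (S : Subfield E) :
    CharP S p where
  cast_eq_zero_iff x := by
    rw [← CharP.cast_eq_zero_iff E p x]
    constructor
    · intro h
      have h2 := congrArg S.subtype h
      simpa using h2
    · intro h
      apply Subtype.ext
      simpa using h

lemma pow_val_natCast {G : Type*} [Group G] (g : G) {n : ℕ} [NeZero n]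
    (horder : orderOf g = n) (m : ℕ) : g ^ ((m : ZMod n)).val = g ^ m := by
  rw [ZMod.val_natCast, pow_eq_pow_iff_modEq, horder]
  exact Nat.mod_modEq m n

lemma exists_good_generator {G G₀ : Type*} [Group G] [Group G₀] [Finite G] [Finite G₀]
    [IsCyclic G] [IsCyclic G₀] (ι : G₀ →* G) (hι : Function.Injective ι)
    {n n₀ : ℕ} (hn : Nat.card G = n) (hn₀ : Nat.card G₀ = n₀)
    (hdvd : n₀ ∣ n) (h2 : 1 < n₀) :
    ∃ (g : G) (g₀ : G₀), (∀ x, x ∈ Subgroup.zpowers g) ∧ (∀ x, x ∈ Subgroup.zpowers g₀) ∧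
      orderOf g = n ∧ orderOf g₀ = n₀ ∧ g ^ (n / n₀) = ι g₀ := by
  have hn0 : n ≠ 0 := by
    have := Nat.card_pos (α := G)
    omega
  have hn₀0 : n₀ ≠ 0 := by omega
  obtain ⟨g₀, hg₀⟩ := IsCyclic.exists_generator (α := G₀)
  obtain ⟨h, hh⟩ := IsCyclic.exists_generator (α := G)
  have horder₀ : orderOf g₀ = n₀ := by
    rw [orderOf_eq_card_of_forall_mem_zpowers hg₀, hn₀]
  have horderh : orderOf h = n := by
    rw [orderOf_eq_card_of_forall_mem_zpowers hh, hn]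
  obtain ⟨s, hs0⟩ := (mem_powers_iff_mem_zpowers).mpr (hh (ι g₀))
  have hs : h ^ s = ι g₀ := hs0
  have hιg₀ : orderOf (ι g₀) = n₀ := by
    rw [orderOf_injective ι hι g₀, horder₀]
  have hpow_ord : orderOf (h ^ s) = n / Nat.gcd n s := by
    rw [orderOf_pow, horderh]
  have hw : n / Nat.gcd n s = n₀ := by rw [← hpow_ord, hs, hιg₀]
  have hw_dvd_n : Nat.gcd n s ∣ n := Nat.gcd_dvd_left n s
  have hdn : (n / n₀) * n₀ = n := Nat.div_mul_cancel hdvd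
  have hwn : n₀ * Nat.gcd n s = n := by
    rw [← hw]
    exact Nat.div_mul_cancel hw_dvd_n
  have hwd : Nat.gcd n s = n / n₀ := by
    have hh2 : n₀ * Nat.gcd n s = n₀ * (n / n₀) := by
      calc n₀ * Nat.gcd n s = n := hwn
        _ = (n / n₀) * n₀ := hdn.symm
        _ = n₀ * (n / n₀) := mul_comm _ _
    exact Nat.eq_of_mul_eq_mul_left (by omega) hh2
  have hd0 : n / n₀ ≠ 0 := by
    intro h0
    rw [h0, zero_mul] at hdn
    exact hn0 hdn.symm
  obtain ⟨s', rfl⟩ : (n / n₀) ∣ s := hwd ▸ Nat.gcd_dvd_right n s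
  have hcop : Nat.gcd n₀ s' = 1 := by
    have hgm : Nat.gcd ((n / n₀) * n₀) ((n / n₀) * s') = (n / n₀) * Nat.gcd n₀ s' :=
      Nat.gcd_mul_left (n / n₀) n₀ s'
    rw [hdn] at hgm
    have hh3 : (n / n₀) * Nat.gcd n₀ s' = (n / n₀) * 1 := by
      rw [mul_one, ← hgm, hwd]
    exact Nat.eq_of_mul_eq_mul_left (Nat.pos_of_ne_zero hd0) hh3
  have hcop' : Nat.Coprime s' n₀ := Nat.Coprime.symm hcop
  haveI : NeZero n := ⟨hn0⟩
  obtain ⟨U, hU⟩ := ZMod.unitsMap_surjective hdvd (ZMod.unitOfCoprime s' hcop')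
  have htcop : Nat.Coprime ((U : ZMod n).val) n := ZMod.val_coe_unit_coprime U
  have hts' : (((U : ZMod n).val : ℕ) : ZMod n₀) = ((s' : ℕ) : ZMod n₀) := by
    have e1 : ((ZMod.unitsMap hdvd U : (ZMod n₀)ˣ) : ZMod n₀) = (s' : ZMod n₀) := by
      rw [hU, ZMod.coe_unitOfCoprime]
    rw [ZMod.unitsMap] at e1
    rw [Units.coe_map] at e1
    simp only [MonoidHom.coe_coe, ZMod.castHom_apply] at e1
    rw [ZMod.natCast_val]
    exact e1
  have htmod : (U : ZMod n).val ≡ s' [MOD n₀] :=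
    (ZMod.natCast_eq_natCast_iff _ _ _).mp hts'
  have horderg : orderOf (h ^ (U : ZMod n).val) = n := by
    rw [orderOf_pow, horderh, Nat.Coprime.gcd_eq_one (Nat.Coprime.symm htcop), Nat.div_one]
  refine ⟨h ^ (U : ZMod n).val, g₀, ?_, hg₀, horderg, horder₀, ?_⟩
  · have htop : Subgroup.zpowers (h ^ (U : ZMod n).val) = ⊤ :=
      Subgroup.eq_top_of_card_eq _ (by rw [Nat.card_zpowers, horderg, hn])
    intro x
    rw [htop]
    exact Subgroup.mem_top x
  · rw [← pow_mul, ← hs, pow_eq_pow_iff_modEq, horderh]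
    have hm := Nat.ModEq.mul_right' (c := n / n₀) htmod
    have hnn : n₀ * (n / n₀) = n := by rw [mul_comm]; exact hdn
    rw [hnn] at hm
    calc (U : ZMod n).val * (n / n₀) ≡ s' * (n / n₀) [MOD n] := hm
      _ = (n / n₀) * s' := by ring

def fixedSubfield (E : Type*) [Field E] (p m : ℕ) [Fact p.Prime] [CharP E p] :
    Subfield E where
  carrier := {x : E | x ^ p ^ m = x}
  zero_mem' := zero_pow (pow_ne_zero m (Nat.Prime.ne_zero Fact.out))
  one_mem' := one_pow _
  add_mem' := by
    intro a b ha hb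
    simp only [Set.mem_setOf_eq] at *
    rw [add_pow_char_pow, ha, hb]
  mul_mem' := by
    intro a b ha hb
    simp only [Set.mem_setOf_eq] at *
    rw [mul_pow, ha, hb]
  neg_mem' := by
    intro a ha
    simp only [Set.mem_setOf_eq] at *
    rw [neg_eq_neg_one_mul a, mul_pow, neg_one_pow_char_pow, ha]
  inv_mem' := by
    intro a ha
    simp only [Set.mem_setOf_eq] at *
    rw [inv_pow, ha]

lemma mem_fixedSubfield {E : Type*} [Field E] {p m : ℕ} [Fact p.Prime] [CharP E p] {x : E} :
    x ∈ fixedSubfield E p m ↔ x ^ p ^ m = x := Iff.rfl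

/-- Let `p` be a prime, `q₀ = p^k` (`k ≥ 1`), `q = q₀^e` (`e ≥ 1`), with `q₀ ≢ 1 (mod 3)`
and `e ≢ 0 (mod 3)`.  Set `n₀ = q₀² + q₀ + 1` and `n = q² + q + 1`.  Then `n₀ ∣ n`, and
there exist difference sets `D₀ ⊆ ℤ/n₀ℤ` and `D ⊆ ℤ/nℤ` with `0, 1 ∈ D₀` and such that
`(n/n₀)·d ∈ D` for every `d ∈ D₀` (computed from the integer representative of `d`). -/
theorem exists_compatible_difference_sets
    (p k e : ℕ) (hp : p.Prime) (hk : 1 ≤ k) (he : 1 ≤ e)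
    (q₀ q n₀ n : ℕ) (hq₀ : q₀ = p ^ k) (hq : q = q₀ ^ e)
    (hq3 : q₀ % 3 ≠ 1) (he3 : e % 3 ≠ 0)
    (hn₀ : n₀ = q₀ ^ 2 + q₀ + 1) (hn : n = q ^ 2 + q + 1) :
    n₀ ∣ n ∧
    ∃ (D₀ : Set (ZMod n₀)) (D : Set (ZMod n)),
      IsDifferenceSet D₀ ∧ IsDifferenceSet D ∧
      (0 : ZMod n₀) ∈ D₀ ∧ (1 : ZMod n₀) ∈ D₀ ∧
      ∀ d ∈ D₀, ((n / n₀ * d.val : ℕ) : ZMod n) ∈ D := by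
  classical
  haveI hfact : Fact p.Prime := ⟨hp⟩
  have hp2 : 2 ≤ p := hp.two_le
  have hq₀2 : 2 ≤ q₀ := by
    rw [hq₀]
    calc 2 = 2 ^ 1 := by norm_num
      _ ≤ 2 ^ k := Nat.pow_le_pow_right (by norm_num) hk
      _ ≤ p ^ k := Nat.pow_le_pow_left hp2 k
  have hqpke : q = p ^ (k * e) := by rw [hq, hq₀, ← pow_mul]
  have hq2 : 2 ≤ q := by
    rw [hq]
    calc 2 ≤ q₀ := hq₀2
      _ = q₀ ^ 1 := (pow_one q₀).symm
      _ ≤ q₀ ^ e := Nat.pow_le_pow_right (by omega) he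
  have hdvd : n₀ ∣ n := n0_dvd_n he3 hn₀ (by rw [hn, hq])
  have hn₀7 : 7 ≤ n₀ := by rw [hn₀]; nlinarith
  have hn7 : 7 ≤ n := by rw [hn]; nlinarith
  haveI : NeZero n := ⟨by omega⟩
  haveI : NeZero n₀ := ⟨by omega⟩
  have h3e : ¬ 3 ∣ e := by
    rintro ⟨c, rfl⟩
    omega
  have hgcdk : Nat.gcd (k * e) (3 * k) = k := by
    have hcop : Nat.Coprime 3 e := (Nat.Prime.coprime_iff_not_dvd Nat.prime_three).mpr h3e
    have hcop' : Nat.gcd e 3 = 1 := hcop.symm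
    rw [mul_comm 3 k, Nat.gcd_mul_left, hcop', mul_one]
  -- the big field
  set M := 3 * (k * e) with hM
  have hM0 : M ≠ 0 := by
    rw [hM]
    have : k * e ≠ 0 := by
      intro h0
      rcases Nat.mul_eq_zero.mp h0 with h | h <;> omega
    omega
  let E := GaloisField p M
  letI : Fintype E := Fintype.ofFinite E
  have hcardE : Fintype.card E = q ^ 3 := by
    rw [← Nat.card_eq_fintype_card, GaloisField.card p M hM0, hqpke, ← pow_mul]
    congr 1
    rw [hM]
    ring
  have hq0E : (q : E) = 0 := by
    rw [hqpke]
    push_cast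
    rw [CharP.cast_eq_zero E p]
    exact zero_pow (by intro h0; rcases Nat.mul_eq_zero.mp h0 with h | h <;> omega)
  have hfrobE : ∀ x y : E, (x + y) ^ q = x ^ q + y ^ q := by
    intro x y
    rw [hqpke]
    exact add_pow_char_pow x y p (k * e)
  -- the subfield of order q₀^3
  let F₀ : Subfield E := fixedSubfield E p (3 * k)
  let E₀ : Type _ := ↥F₀
  haveI : CharP E₀ p := charP_subfield p F₀
  letI : Fintype E₀ := Fintype.ofFinite _
  have hq₀pk : q₀ = p ^ k := hq₀
  have hcardE₀ : Fintype.card E₀ = q₀ ^ 3 := by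
    have h1 : ({x : E | x ^ p ^ (3 * k) = x}).ncard = p ^ (3 * k) := by
      apply card_fixed_pow _ ?_ ?_ ?_
      · calc 2 = 2 ^ 1 := by norm_num
          _ ≤ 2 ^ (3 * k) := Nat.pow_le_pow_right (by norm_num) (by omega)
          _ ≤ p ^ (3 * k) := Nat.pow_le_pow_left hp2 _
      · push_cast
        rw [CharP.cast_eq_zero E p]
        exact zero_pow (by omega)
      · rw [hcardE, hqpke, ← pow_mul]
        exact pow_sub_one_dvd_pow_sub_one p (3 * k) (k * e * 3) ⟨e, by ring⟩
    rw [← Nat.card_eq_fintype_card]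
    have h2 : Nat.card E₀ = ({x : E | x ^ p ^ (3 * k) = x}).ncard :=
      Nat.card_coe_set_eq _
    rw [h2, h1, hq₀pk, ← pow_mul]
    congr 1
    ring
  have hq0E₀ : (q₀ : E₀) = 0 := by
    rw [hq₀pk]
    push_cast
    rw [CharP.cast_eq_zero E₀ p]
    exact zero_pow (by omega)
  have hfrobE₀ : ∀ x y : E₀, (x + y) ^ q₀ = x ^ q₀ + y ^ q₀ := by
    intro x y
    rw [hq₀pk]
    exact add_pow_char_pow x y p k
  -- groups
  haveI : Finite (Eˣ ⧸ Sgrp E q) := Quotient.finite _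
  haveI : Finite (E₀ˣ ⧸ Sgrp E₀ q₀) := Quotient.finite _
  haveI : IsCyclic (Eˣ ⧸ Sgrp E q) :=
    isCyclic_of_surjective _ (QuotientGroup.mk'_surjective (Sgrp E q))
  haveI : IsCyclic (E₀ˣ ⧸ Sgrp E₀ q₀) :=
    isCyclic_of_surjective _ (QuotientGroup.mk'_surjective (Sgrp E₀ q₀))
  have hcardC : Nat.card (Eˣ ⧸ Sgrp E q) = n := card_quot E hq2 hq0E hcardE hn
  have hcardC₀ : Nat.card (E₀ˣ ⧸ Sgrp E₀ q₀) = n₀ := card_quot E₀ hq₀2 hq0E₀ hcardE₀ hn₀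
  -- the connecting homomorphism
  let jh : E₀ →+* E := F₀.subtype
  have hjinj : Function.Injective jh := Subtype.val_injective
  let ψ : E₀ˣ →* (Eˣ ⧸ Sgrp E q) :=
    (QuotientGroup.mk' (Sgrp E q)).comp (Units.map jh.toMonoidHom)
  have hψ : ∀ x : E₀ˣ, ψ x = QuotientGroup.mk (Units.map jh.toMonoidHom x) := fun x => rfl
  have hker : ∀ x : E₀ˣ, ψ x = 1 ↔ x ∈ Sgrp E₀ q₀ := by
    intro x
    rw [hψ, QuotientGroup.eq_one_iff]
    have hc : ((Units.map jh.toMonoidHom x : Eˣ) : E) = jh ((x : E₀ˣ) : E₀) := rfl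
    constructor
    · intro hmem
      have hq' : (jh ((x : E₀ˣ) : E₀)) ^ q = jh ((x : E₀ˣ) : E₀) := by
        have := (mem_Sgrp).mp hmem
        rwa [hc] at this
      have h3k : (jh ((x : E₀ˣ) : E₀)) ^ p ^ (3 * k) = jh ((x : E₀ˣ) : E₀) :=
        ((x : E₀ˣ) : E₀).2
      rw [hqpke] at hq'
      have hgk := fix_pow_gcd p hq' h3k
      rw [hgcdk] at hgk
      show ((x : E₀ˣ) : E₀) ^ q₀ = ((x : E₀ˣ) : E₀)
      apply hjinj
      rw [map_pow, hq₀pk]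
      exact hgk
    · intro hmem
      have h1 : ((x : E₀ˣ) : E₀) ^ q₀ = ((x : E₀ˣ) : E₀) := hmem
      show (↑(Units.map jh.toMonoidHom x) : E) ^ q = ↑(Units.map jh.toMonoidHom x)
      rw [hc, hqpke]
      apply fix_pow_dvd p (Dvd.intro e rfl)
      rw [← hq₀pk]
      rw [← map_pow, h1]
  let ι : (E₀ˣ ⧸ Sgrp E₀ q₀) →* (Eˣ ⧸ Sgrp E q) :=
    QuotientGroup.lift (Sgrp E₀ q₀) ψ (fun x hx => (hker x).mpr hx)
  have hι_mk : ∀ x : E₀ˣ, ι (QuotientGroup.mk x) = ψ x := fun x => rfl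
  have hιinj : Function.Injective ι := by
    rw [injective_iff_map_eq_one]
    intro c hc
    induction c using QuotientGroup.induction_on with
    | H x =>
      rw [hι_mk] at hc
      exact (QuotientGroup.eq_one_iff x).mpr ((hker x).mp hc)
  obtain ⟨g, g₀, hgGen, hg₀Gen, horder, horder₀, hgd⟩ :=
    exists_good_generator ι hιinj hcardC hcardC₀ hdvd (by omega)
  obtain ⟨u₀, hu₀mk⟩ := QuotientGroup.mk_surjective g₀
  have hg₀ne1 : g₀ ≠ 1 := by
    intro h1
    rw [h1, orderOf_one] at horder₀
    omega
  have hu₀fix : ((u₀ : E₀)) ^ q₀ ≠ (u₀ : E₀) := by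
    intro hfix
    exact hg₀ne1 (by rw [← hu₀mk]; exact (QuotientGroup.eq_one_iff u₀).mpr hfix)
  set uE : E := jh (u₀ : E₀) with huEdef
  have huE : uE ^ q ≠ uE := by
    intro hfix
    have h3k : uE ^ p ^ (3 * k) = uE := (u₀ : E₀).2
    rw [hqpke] at hfix
    have hgk := fix_pow_gcd p hfix h3k
    rw [hgcdk] at hgk
    apply hu₀fix
    apply hjinj
    rw [map_pow, hq₀pk]
    exact hgk
  -- the difference sets
  refine ⟨hdvd, {b : ZMod n₀ | g₀ ^ b.val ∈ Dproj E₀ q₀ (u₀ : E₀)},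
    {b : ZMod n | g ^ b.val ∈ Dproj E q uE}, ?_, ?_, ?_, ?_, ?_⟩
  · intro a ha
    exact group_diff_set n₀ (by omega) g₀ horder₀ hg₀Gen (Dproj E₀ q₀ (u₀ : E₀))
      (fun c hc => singer_quot hq₀2 hq0E₀ hfrobE₀ hcardE₀ hu₀fix hc) a ha
  · intro a ha
    exact group_diff_set n (by omega) g horder hgGen (Dproj E q uE)
      (fun c hc => singer_quot hq2 hq0E hfrobE hcardE huE hc) a ha
  · show g₀ ^ (0 : ZMod n₀).val ∈ Dproj E₀ q₀ (u₀ : E₀)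
    rw [ZMod.val_zero, pow_zero]
    exact ⟨1, ⟨1, 0, one_pow _, zero_pow (by omega), by simp⟩, (QuotientGroup.eq_one_iff 1).mpr (one_mem _)⟩
  · haveI : Fact (1 < n₀) := ⟨by omega⟩
    show g₀ ^ (1 : ZMod n₀).val ∈ Dproj E₀ q₀ (u₀ : E₀)
    rw [ZMod.val_one, pow_one]
    exact ⟨u₀, ⟨0, 1, zero_pow (by omega), one_pow _, by ring⟩, hu₀mk⟩
  · intro d hd
    obtain ⟨x₀, hx₀W, hx₀mk⟩ := hd
    show g ^ (((n / n₀ * d.val : ℕ) : ZMod n)).val ∈ Dproj E q uE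
    rw [pow_val_natCast g horder (n / n₀ * d.val), pow_mul, hgd, ← map_pow, ← hx₀mk]
    refine ⟨Units.map jh.toMonoidHom x₀, ?_, rfl⟩
    obtain ⟨a, b, ha, hb, hxab⟩ := hx₀W
    refine ⟨jh a, jh b, ?_, ?_, ?_⟩
    · rw [hqpke]
      apply fix_pow_dvd p (Dvd.intro e rfl)
      rw [← hq₀pk, ← map_pow, ha]
    · rw [hqpke]
      apply fix_pow_dvd p (Dvd.intro e rfl)
      rw [← hq₀pk, ← map_pow, hb]
    · show jh ((x₀ : E₀ˣ) : E₀) = jh a + jh b * uE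
      rw [huEdef]
      have h5 : ((x₀ : E₀ˣ) : E₀) = a + b * (u₀ : E₀) := hxab
      calc jh ((x₀ : E₀ˣ) : E₀) = jh (a + b * (u₀ : E₀)) := by rw [h5]
        _ = jh a + jh b * jh (u₀ : E₀) := by
            rw [RingHom.map_add, RingHom.map_mul]
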